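/- Let X and Y be real random variables with finite second moments. Then Cov(X,Y) = ∫∫ [P(X ≤ x, Y ≤ y) - P(X ≤ x)P(Y ≤ y)] dx dy (Hoeffding's covariance identity). -/

import Mathlib

open MeasureTheory Set

namespace HoeffAux

noncomputable def e (a x : ℝ) : ℝ := if x < a then 1 else 0

lemma e_sub (a a' : ℝ) : (fun x => e a x - e a' x)
    = fun x => (Ico a' a).indicator 1 x - (Ico a a').indicator 1 x := by
  funext x
  unfold e
  rcases lt_or_ge x a with h1 | h1 <;> rcases lt_or_ge x a' with h2 | h2
  · simp [indicator, mem_Ico, h1, h2, not_le.2 h1, not_le.2 h2]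
  · simp [indicator, mem_Ico, h1, h2, not_le.2 h1]
  · simp [indicator, mem_Ico, h1, h2, not_le.2 h2, not_lt.2 h1]
  · simp [indicator, mem_Ico, h2, not_lt.2 h1, not_lt.2 h2]

lemma e_sub_eq_of_le {a a' : ℝ} (h : a' ≤ a) :
    (fun x => e a x - e a' x) = (Ico a' a).indicator 1 := by
  rw [e_sub]; funext x; rw [Ico_eq_empty (not_lt.2 h)]; simp

lemma e_int (a a' : ℝ) : Integrable (fun x => e a x - e a' x) (volume : Measure ℝ) := by
  rw [e_sub]
  refine Integrable.sub ?_ ?_ <;>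
  · rw [integrable_indicator_iff measurableSet_Ico]
    exact integrableOn_const (by simp [Real.volume_Ico, ENNReal.ofReal_lt_top])

lemma e_integral (a a' : ℝ) : ∫ x, (e a x - e a' x) = a - a' := by
  rcases le_total a' a with h | h
  · rw [e_sub_eq_of_le h, integral_indicator_one measurableSet_Ico, measureReal_def, Real.volume_Ico,
      ENNReal.toReal_ofReal (by linarith)]
  · have : (fun x => e a x - e a' x) = fun x => -((fun x => e a' x - e a x) x) := by
      funext x; ring
    rw [this, integral_neg, e_sub_eq_of_le h, integral_indicator_one measurableSet_Ico,
      measureReal_def, Real.volume_Ico, ENNReal.toReal_ofReal (by linarith)]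
    ring

lemma e_abs_integral (a a' : ℝ) : ∫ x, |e a x - e a' x| = |a - a'| := by
  have key : ∀ b b' : ℝ, b' ≤ b → ∫ x, |e b x - e b' x| = |b - b'| := by
    intro b b' h
    have hnn : ∀ x, 0 ≤ e b x - e b' x := by
      intro x
      have := congrFun (e_sub_eq_of_le h) x
      rw [this]
      exact indicator_nonneg (fun _ _ => by norm_num) x
    rw [abs_of_nonneg (by linarith : (0:ℝ) ≤ b - b'), ← e_integral b b']
    congr 1; funext x; exact abs_of_nonneg (hnn x)
  rcases le_total a' a with h | h
  · exact key a a' h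
  · have : ∀ x, |e a x - e a' x| = |e a' x - e a x| := fun x => abs_sub_comm _ _
    simp_rw [this]
    rw [key a' a h, abs_sub_comm]

lemma l2_mul {α : Type*} [MeasurableSpace α] {μ : Measure α} {f g : α → ℝ}
    (hf : MemLp f 2 μ) (hg : MemLp g 2 μ) : Integrable (fun x => f x * g x) μ := by
  have h := hf.smul (E := ℝ) (𝕜 := ℝ) hg (p := 2) (q := 2) (r := 1) (hpqr := ⟨by
    rw [inv_one, ENNReal.inv_two_add_inv_two]⟩)
  rw [← memLp_one_iff_integrable]
  have : (g • f) = fun x => f x * g x := by funext x; simp [mul_comm]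
  rwa [this] at h

lemma compl_cov {Ω : Type*} [MeasurableSpace Ω] (P : Measure Ω) [IsProbabilityMeasure P]
    (A B : Set Ω) (hA : MeasurableSet A) (hB : MeasurableSet B) :
    (P (Aᶜ ∩ Bᶜ)).toReal - (P Aᶜ).toReal * (P Bᶜ).toReal
      = (P (A ∩ B)).toReal - (P A).toReal * (P B).toReal := by
  have hAB : (P (A ∪ B)).toReal + (P (A ∩ B)).toReal = (P A).toReal + (P B).toReal := by
    rw [← ENNReal.toReal_add (measure_ne_top _ _) (measure_ne_top _ _),
      ← ENNReal.toReal_add (measure_ne_top _ _) (measure_ne_top _ _),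
      measure_union_add_inter A hB]
  have hcompl : ∀ s : Set Ω, MeasurableSet s → (P sᶜ).toReal = 1 - (P s).toReal := by
    intro s hs
    rw [measure_compl hs (measure_ne_top _ _), measure_univ,
      ENNReal.toReal_sub_of_le prob_le_one ENNReal.one_ne_top, ENNReal.toReal_one]
  rw [← compl_union, hcompl _ (hA.union hB), hcompl _ hA, hcompl _ hB]
  nlinarith [hAB]

lemma prod_expand {Ω : Type*} [MeasurableSpace Ω] (P : Measure Ω) [IsProbabilityMeasure P]
    (f g : Ω → ℝ) (hf : Integrable f P) (hg : Integrable g P)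
    (hfg : Integrable (fun ω => f ω * g ω) P)
    (hI : Integrable (fun p : Ω × Ω => (f p.1 - f p.2) * (g p.1 - g p.2)) (P.prod P)) :
    ∫ p : Ω × Ω, (f p.1 - f p.2) * (g p.1 - g p.2) ∂(P.prod P)
      = 2 * (∫ ω, f ω * g ω ∂P - (∫ ω, f ω ∂P) * ∫ ω, g ω ∂P) := by
  rw [integral_prod _ hI]
  have inner : ∀ ω, (∫ ω', (f ω - f ω') * (g ω - g ω') ∂P)
      = f ω * g ω - f ω * (∫ ω', g ω' ∂P) - g ω * (∫ ω', f ω' ∂P) + ∫ ω', f ω' * g ω' ∂P := by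
    intro ω
    have hfun : (fun ω' => (f ω - f ω') * (g ω - g ω'))
        = fun ω' => f ω * g ω - f ω * g ω' - g ω * f ω' + f ω' * g ω' := by
      funext ω'; ring
    rw [hfun, integral_add, integral_sub, integral_sub, integral_const, integral_const_mul,
      integral_const_mul, probReal_univ, smul_eq_mul, one_mul]
    · exact integrable_const _
    · exact hg.const_mul _
    · exact (integrable_const _).sub (hg.const_mul _)
    · exact hf.const_mul _
    · exact ((integrable_const _).sub (hg.const_mul _)).sub (hf.const_mul _)
    · exact hfg
  have houter : (fun ω => ∫ ω', (f ω - f ω') * (g ω - g ω') ∂P)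
      = fun ω => f ω * g ω - f ω * (∫ ω', g ω' ∂P) - g ω * (∫ ω', f ω' ∂P)
          + ∫ ω', f ω' * g ω' ∂P := funext inner
  rw [houter, integral_add, integral_sub, integral_sub, integral_mul_const, integral_mul_const,
    integral_const, probReal_univ, smul_eq_mul, one_mul]
  · ring
  · exact hfg
  · exact hf.mul_const _
  · exact hfg.sub (hf.mul_const _)
  · exact hg.mul_const _
  · exact (hfg.sub (hf.mul_const _)).sub (hg.mul_const _)
  · exact integrable_const _

lemma e_bounds (a x : ℝ) : 0 ≤ e a x ∧ e a x ≤ 1 := by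
  unfold e; split_ifs <;> norm_num

lemma key {Ω : Type*} [MeasurableSpace Ω] (P : Measure Ω) [IsProbabilityMeasure P]
    (X Y : Ω → ℝ) (hXm : Measurable X) (hYm : Measurable Y)
    (hX : MemLp X 2 P) (hY : MemLp Y 2 P) :
    ∫ ω, X ω * Y ω ∂P - (∫ ω, X ω ∂P) * (∫ ω, Y ω ∂P)
      = ∫ x, ∫ y,
          ((P {ω | X ω ≤ x ∧ Y ω ≤ y}).toReal
            - (P {ω | X ω ≤ x}).toReal * (P {ω | Y ω ≤ y}).toReal)
          ∂(volume : Measure ℝ) ∂(volume : Measure ℝ) := by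
  have hXi : Integrable X P := hX.integrable one_le_two
  have hYi : Integrable Y P := hY.integrable one_le_two
  have hXY : Integrable (fun ω => X ω * Y ω) P := l2_mul hX hY
  have hmpf : MeasurePreserving (Prod.fst : Ω × Ω → Ω) (P.prod P) P :=
    ⟨measurable_fst, Measure.fst_prod⟩
  have hmps : MeasurePreserving (Prod.snd : Ω × Ω → Ω) (P.prod P) P :=
    ⟨measurable_snd, Measure.snd_prod⟩
  have hX1 : MemLp (fun p : Ω × Ω => X p.1) 2 (P.prod P) := hX.comp_measurePreserving hmpf
  have hX2 : MemLp (fun p : Ω × Ω => X p.2) 2 (P.prod P) := hX.comp_measurePreserving hmps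
  have hY1 : MemLp (fun p : Ω × Ω => Y p.1) 2 (P.prod P) := hY.comp_measurePreserving hmpf
  have hY2 : MemLp (fun p : Ω × Ω => Y p.2) 2 (P.prod P) := hY.comp_measurePreserving hmps
  have hΔX : MemLp (fun p : Ω × Ω => X p.1 - X p.2) 2 (P.prod P) := hX1.sub hX2
  have hΔY : MemLp (fun p : Ω × Ω => Y p.1 - Y p.2) 2 (P.prod P) := hY1.sub hY2
  have hprod : Integrable (fun p : Ω × Ω => (X p.1 - X p.2) * (Y p.1 - Y p.2)) (P.prod P) :=
    l2_mul hΔX hΔY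
  set K : Ω × Ω → ℝ × ℝ → ℝ := fun p q =>
    (e (X p.1) q.1 - e (X p.2) q.1) * (e (Y p.1) q.2 - e (Y p.2) q.2) with hK
  have hKmeas : Measurable (Function.uncurry K) := by
    have m1 : ∀ (f : Ω → ℝ), Measurable f →
        Measurable (fun z : (Ω × Ω) × ℝ × ℝ => e (f z.1.1) z.2.1) := by
      intro f hf
      simp only [e]
      exact Measurable.ite
        (measurableSet_lt (measurable_fst.comp measurable_snd)
          (hf.comp (measurable_fst.comp measurable_fst)))
        measurable_const measurable_const
    have m2 : ∀ (f : Ω → ℝ), Measurable f →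
        Measurable (fun z : (Ω × Ω) × ℝ × ℝ => e (f z.1.2) z.2.1) := by
      intro f hf
      simp only [e]
      exact Measurable.ite
        (measurableSet_lt (measurable_fst.comp measurable_snd)
          (hf.comp (measurable_snd.comp measurable_fst)))
        measurable_const measurable_const
    have m3 : ∀ (f : Ω → ℝ), Measurable f →
        Measurable (fun z : (Ω × Ω) × ℝ × ℝ => e (f z.1.1) z.2.2) := by
      intro f hf
      simp only [e]
      exact Measurable.ite
        (measurableSet_lt (measurable_snd.comp measurable_snd)
          (hf.comp (measurable_fst.comp measurable_fst)))
        measurable_const measurable_const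
    have m4 : ∀ (f : Ω → ℝ), Measurable f →
        Measurable (fun z : (Ω × Ω) × ℝ × ℝ => e (f z.1.2) z.2.2) := by
      intro f hf
      simp only [e]
      exact Measurable.ite
        (measurableSet_lt (measurable_snd.comp measurable_snd)
          (hf.comp (measurable_snd.comp measurable_fst)))
        measurable_const measurable_const
    exact (((m1 X hXm).sub (m2 X hXm)).mul ((m3 Y hYm).sub (m4 Y hYm)))
  have hKint : Integrable (Function.uncurry K)
      ((P.prod P).prod ((volume : Measure ℝ).prod volume)) := by
    refine (integrable_prod_iff hKmeas.aestronglyMeasurable).2 ⟨?_, ?_⟩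
    · refine Filter.Eventually.of_forall fun p => ?_
      exact (e_int (X p.1) (X p.2)).mul_prod (e_int (Y p.1) (Y p.2))
    · have heq : (fun p : Ω × Ω =>
          ∫ q : ℝ × ℝ, ‖Function.uncurry K (p, q)‖ ∂((volume : Measure ℝ).prod volume))
          = fun p => |X p.1 - X p.2| * |Y p.1 - Y p.2| := by
        funext p
        have hpt : (fun q : ℝ × ℝ => ‖Function.uncurry K (p, q)‖)
            = fun q : ℝ × ℝ => |e (X p.1) q.1 - e (X p.2) q.1| * |e (Y p.1) q.2 - e (Y p.2) q.2| := by
          funext q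
          simp [Function.uncurry, hK, abs_mul]
        rw [hpt, integral_prod_mul (fun x => |e (X p.1) x - e (X p.2) x|)
          (fun y => |e (Y p.1) y - e (Y p.2) y|), e_abs_integral, e_abs_integral]
      rw [heq]
      have := (l2_mul hΔX hΔY).abs
      simpa [abs_mul] using this
  have hswap := integral_integral_swap (f := K) hKint
  have hinner : ∀ p : Ω × Ω, ∫ q : ℝ × ℝ, K p q ∂((volume : Measure ℝ).prod volume)
      = (X p.1 - X p.2) * (Y p.1 - Y p.2) := by
    intro p
    have := integral_prod_mul (μ := (volume : Measure ℝ)) (ν := volume)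
      (fun x => e (X p.1) x - e (X p.2) x) (fun y => e (Y p.1) y - e (Y p.2) y)
    rw [e_integral, e_integral] at this
    exact this
  have hA : ∀ x : ℝ, MeasurableSet {ω | X ω ≤ x} := fun x => measurableSet_le hXm measurable_const
  have hB : ∀ y : ℝ, MeasurableSet {ω | Y ω ≤ y} := fun y => measurableSet_le hYm measurable_const
  have houter : ∀ q : ℝ × ℝ, ∫ p : Ω × Ω, K p q ∂(P.prod P)
      = 2 * ((P {ω | X ω ≤ q.1 ∧ Y ω ≤ q.2}).toReal
          - (P {ω | X ω ≤ q.1}).toReal * (P {ω | Y ω ≤ q.2}).toReal) := by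
    rintro ⟨x, y⟩
    set u : Ω → ℝ := fun ω => e (X ω) x with hu
    set v : Ω → ℝ := fun ω => e (Y ω) y with hv
    have hu_eq : u = ({ω | x < X ω} : Set Ω).indicator 1 := by
      funext ω; simp [hu, e, indicator]
    have hv_eq : v = ({ω | y < Y ω} : Set Ω).indicator 1 := by
      funext ω; simp [hv, e, indicator]
    have hAs : MeasurableSet {ω | x < X ω} := measurableSet_lt measurable_const hXm
    have hBs : MeasurableSet {ω | y < Y ω} := measurableSet_lt measurable_const hYm
    have hui : Integrable u P := by
      rw [hu_eq, integrable_indicator_iff hAs]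
      exact integrableOn_const (measure_ne_top _ _)
    have hvi : Integrable v P := by
      rw [hv_eq, integrable_indicator_iff hBs]
      exact integrableOn_const (measure_ne_top _ _)
    have huv_eq : (fun ω => u ω * v ω) = ({ω | x < X ω} ∩ {ω | y < Y ω}).indicator 1 := by
      funext ω
      simp only [hu_eq, hv_eq, indicator, mem_inter_iff, mem_setOf_eq, Pi.one_apply]
      by_cases h1 : x < X ω <;> by_cases h2 : y < Y ω <;> simp [h1, h2]
    have huvi : Integrable (fun ω => u ω * v ω) P := by
      rw [huv_eq, integrable_indicator_iff (hAs.inter hBs)]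
      exact integrableOn_const (measure_ne_top _ _)
    have h4 : Integrable (fun p : Ω × Ω => (u p.1 - u p.2) * (v p.1 - v p.2)) (P.prod P) := by
      refine Integrable.mono' (integrable_const (1 : ℝ)) ?_ ?_
      · have hum : Measurable u := by
          simp only [hu, e]
          exact Measurable.ite hAs measurable_const measurable_const
        have hvm : Measurable v := by
          simp only [hv, e]
          exact Measurable.ite hBs measurable_const measurable_const
        exact (((hum.comp measurable_fst).sub (hum.comp measurable_snd)).mul
          ((hvm.comp measurable_fst).sub (hvm.comp measurable_snd))).aestronglyMeasurable
      · refine Filter.Eventually.of_forall fun p => ?_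
        rw [Real.norm_eq_abs, abs_mul]
        have b1 := e_bounds (X p.1) x; have b2 := e_bounds (X p.2) x
        have b3 := e_bounds (Y p.1) y; have b4 := e_bounds (Y p.2) y
        have : |u p.1 - u p.2| ≤ 1 := by rw [abs_le]; constructor <;> simp [hu] <;> nlinarith [b1, b2]
        have h2 : |v p.1 - v p.2| ≤ 1 := by rw [abs_le]; constructor <;> simp [hv] <;> nlinarith [b3, b4]
        nlinarith [abs_nonneg (u p.1 - u p.2), abs_nonneg (v p.1 - v p.2)]
    have hexp := prod_expand P u v hui hvi huvi h4
    have hKq : (fun p : Ω × Ω => K p (x, y)) = fun p => (u p.1 - u p.2) * (v p.1 - v p.2) := rfl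
    rw [hKq, hexp]
    have hIu : ∫ ω, u ω ∂P = (P {ω | x < X ω}).toReal := by
      rw [hu_eq, integral_indicator_one hAs, measureReal_def]
    have hIv : ∫ ω, v ω ∂P = (P {ω | y < Y ω}).toReal := by
      rw [hv_eq, integral_indicator_one hBs, measureReal_def]
    have hIuv : ∫ ω, u ω * v ω ∂P = (P ({ω | x < X ω} ∩ {ω | y < Y ω})).toReal := by
      rw [huv_eq, integral_indicator_one (hAs.inter hBs), measureReal_def]
    rw [hIu, hIv, hIuv]
    have hc1 : {ω | x < X ω} = ({ω | X ω ≤ x} : Set Ω)ᶜ := by ext ω; simp [not_le]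
    have hc2 : {ω | y < Y ω} = ({ω | Y ω ≤ y} : Set Ω)ᶜ := by ext ω; simp [not_le]
    have := compl_cov P {ω | X ω ≤ x} {ω | Y ω ≤ y} (hA x) (hB y)
    rw [hc1, hc2, this, Set.setOf_and]
  set G : ℝ × ℝ → ℝ := fun q =>
    (P {ω | X ω ≤ q.1 ∧ Y ω ≤ q.2}).toReal
      - (P {ω | X ω ≤ q.1}).toReal * (P {ω | Y ω ≤ q.2}).toReal with hG
  have hGint : Integrable G ((volume : Measure ℝ).prod volume) := by
    have h2 : Integrable (fun q : ℝ × ℝ => ∫ p, K p q ∂(P.prod P))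
        ((volume : Measure ℝ).prod volume) := hKint.swap.integral_prod_left
    have h3 := h2.const_mul (2⁻¹ : ℝ)
    refine h3.congr (Filter.Eventually.of_forall fun q => ?_)
    show 2⁻¹ * (∫ p : Ω × Ω, K p q ∂(P.prod P)) = G q
    rw [houter q]
    ring
  have hLHS2 := prod_expand P X Y hXi hYi hXY hprod
  have main : 2 * (∫ ω, X ω * Y ω ∂P - (∫ ω, X ω ∂P) * (∫ ω, Y ω ∂P))
      = 2 * ∫ x, ∫ y, G (x, y) ∂(volume : Measure ℝ) ∂(volume : Measure ℝ) := by
    calc 2 * (∫ ω, X ω * Y ω ∂P - (∫ ω, X ω ∂P) * (∫ ω, Y ω ∂P))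
        = ∫ p : Ω × Ω, (X p.1 - X p.2) * (Y p.1 - Y p.2) ∂(P.prod P) := hLHS2.symm
      _ = ∫ p : Ω × Ω, ∫ q : ℝ × ℝ, K p q ∂((volume : Measure ℝ).prod volume) ∂(P.prod P) :=
          integral_congr_ae (Filter.Eventually.of_forall fun p => (hinner p).symm)
      _ = ∫ q : ℝ × ℝ, ∫ p : Ω × Ω, K p q ∂(P.prod P) ∂((volume : Measure ℝ).prod volume) :=
          hswap
      _ = ∫ q : ℝ × ℝ, 2 * G q ∂((volume : Measure ℝ).prod volume) :=
          integral_congr_ae (Filter.Eventually.of_forall fun q => houter q)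
      _ = 2 * ∫ q : ℝ × ℝ, G q ∂((volume : Measure ℝ).prod volume) := integral_const_mul 2 G
      _ = 2 * ∫ x, ∫ y, G (x, y) ∂(volume : Measure ℝ) ∂(volume : Measure ℝ) := by
          rw [integral_prod _ hGint]
  exact mul_left_cancel₀ (two_ne_zero) main

end HoeffAux

/-- Hoeffding's covariance identity: for real random variables `X`, `Y` with finite
second moments, `Cov(X,Y) = ∫∫ [P(X ≤ x, Y ≤ y) − P(X ≤ x) P(Y ≤ y)] dx dy`. -/
theorem hoeffding_covariance_identity {Ω : Type*} [MeasurableSpace Ω]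
    (P : Measure Ω) [IsProbabilityMeasure P] (X Y : Ω → ℝ)
    (hX : MemLp X 2 P) (hY : MemLp Y 2 P) :
    ∫ ω, X ω * Y ω ∂P - (∫ ω, X ω ∂P) * (∫ ω, Y ω ∂P)
      = ∫ x, ∫ y,
          ((P {ω | X ω ≤ x ∧ Y ω ≤ y}).toReal
            - (P {ω | X ω ≤ x}).toReal * (P {ω | Y ω ≤ y}).toReal)
          ∂(volume : Measure ℝ) ∂(volume : Measure ℝ) := by
  set X' : Ω → ℝ := hX.1.mk X with hX'def
  set Y' : Ω → ℝ := hY.1.mk Y with hY'def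
  have hXae : X =ᵐ[P] X' := hX.1.ae_eq_mk
  have hYae : Y =ᵐ[P] Y' := hY.1.ae_eq_mk
  have hX'm : Measurable X' := hX.1.stronglyMeasurable_mk.measurable
  have hY'm : Measurable Y' := hY.1.stronglyMeasurable_mk.measurable
  have hX' : MemLp X' 2 P := hX.ae_eq hXae
  have hY' : MemLp Y' 2 P := hY.ae_eq hYae
  have hkey := HoeffAux.key P X' Y' hX'm hY'm hX' hY'
  have h1 : ∫ ω, X ω * Y ω ∂P = ∫ ω, X' ω * Y' ω ∂P := by
    apply integral_congr_ae
    filter_upwards [hXae, hYae] with ω hx hy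
    rw [hx, hy]
  have h2 : ∫ ω, X ω ∂P = ∫ ω, X' ω ∂P := integral_congr_ae hXae
  have h3 : ∫ ω, Y ω ∂P = ∫ ω, Y' ω ∂P := integral_congr_ae hYae
  have hPx : ∀ x : ℝ, P {ω | X' ω ≤ x} = P {ω | X ω ≤ x} := by
    intro x
    apply measure_congr
    rw [Filter.eventuallyEq_set]
    filter_upwards [hXae] with ω h
    simp [h]
  have hPy : ∀ y : ℝ, P {ω | Y' ω ≤ y} = P {ω | Y ω ≤ y} := by
    intro y
    apply measure_congr
    rw [Filter.eventuallyEq_set]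
    filter_upwards [hYae] with ω h
    simp [h]
  have hPxy : ∀ x y : ℝ, P {ω | X' ω ≤ x ∧ Y' ω ≤ y} = P {ω | X ω ≤ x ∧ Y ω ≤ y} := by
    intro x y
    apply measure_congr
    rw [Filter.eventuallyEq_set]
    filter_upwards [hXae, hYae] with ω hx hy
    simp [hx, hy]
  calc ∫ ω, X ω * Y ω ∂P - (∫ ω, X ω ∂P) * (∫ ω, Y ω ∂P)
      = ∫ ω, X' ω * Y' ω ∂P - (∫ ω, X' ω ∂P) * (∫ ω, Y' ω ∂P) := by rw [h1, h2, h3]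
    _ = ∫ x, ∫ y,
          ((P {ω | X' ω ≤ x ∧ Y' ω ≤ y}).toReal
            - (P {ω | X' ω ≤ x}).toReal * (P {ω | Y' ω ≤ y}).toReal)
          ∂(volume : Measure ℝ) ∂(volume : Measure ℝ) := hkey
    _ = ∫ x, ∫ y,
          ((P {ω | X ω ≤ x ∧ Y ω ≤ y}).toReal
            - (P {ω | X ω ≤ x}).toReal * (P {ω | Y ω ≤ y}).toReal)
          ∂(volume : Measure ℝ) ∂(volume : Measure ℝ) := by
        apply integral_congr_ae
        apply Filter.Eventually.of_forall
        intro x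
        apply integral_congr_ae
        apply Filter.Eventually.of_forall
        intro y
        show (P {ω | X' ω ≤ x ∧ Y' ω ≤ y}).toReal
            - (P {ω | X' ω ≤ x}).toReal * (P {ω | Y' ω ≤ y}).toReal
          = (P {ω | X ω ≤ x ∧ Y ω ≤ y}).toReal
            - (P {ω | X ω ≤ x}).toReal * (P {ω | Y ω ≤ y}).toReal
        rw [hPx x, hPy y, hPxy x y]
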